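/- If T is a tree having no two adjacent vertices both of degree at least four, then χ⃗(T) ≤ 3. -/

import Mathlib

set_option linter.unusedSectionVars false
set_option linter.unusedVariables false
set_option maxHeartbeats 1000000

open SimpleGraph

/-- An orientation of a simple graph `G`: each edge gets exactly one direction.
`dir u v = true` means the edge `uv` is oriented from `u` toward `v` (head `v`). -/
structure Orient {V : Type*} (G : SimpleGraph V) where
  dir : V → V → Bool
  adj_of_dir : ∀ u v, dir u v = true → G.Adj u v
  dir_iff : ∀ u v, G.Adj u v → (dir u v = true ↔ ¬ dir v u = true)

/-- The indegree of a vertex in an orientation. -/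
def Orient.inDeg {V : Type*} [Fintype V] {G : SimpleGraph V} (D : Orient G) (v : V) : ℕ :=
  (Finset.univ.filter (fun u => D.dir u v = true)).card

/-- An orientation is proper if adjacent vertices have distinct indegrees. -/
def Orient.Proper {V : Type*} [Fintype V] {G : SimpleGraph V} (D : Orient G) : Prop :=
  ∀ u v, G.Adj u v → D.inDeg u ≠ D.inDeg v

/-- The proper orientation number: the least `k` such that `G` admits a proper
`k`-orientation (an orientation with all indegrees at most `k`). -/
noncomputable def properOrientNum {V : Type*} [Fintype V] (G : SimpleGraph V) : ℕ :=
  sInf {k | ∃ D : Orient G, D.Proper ∧ ∀ v, D.inDeg v ≤ k}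

open Finset

namespace POTree

variable {V : Type*} [DecidableEq V] {T : SimpleGraph V}

lemma exists_shortest_path (hc : T.Connected) (u v : V) :
    ∃ P : T.Walk u v, P.IsPath ∧ P.length = T.dist u v := by
  obtain ⟨W, hW⟩ := hc.exists_walk_length_eq_dist u v
  refine ⟨W.bypass, W.bypass_isPath, le_antisymm (hW ▸ W.length_bypass_le) (dist_le _)⟩

lemma dist_lt_card [Fintype V] (hc : T.Connected) (u v : V) :
    T.dist u v < Fintype.card V := by
  obtain ⟨P, hP, hl⟩ := exists_shortest_path hc u v
  exact hl ▸ hP.length_lt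

lemma not_mem_support_of_shortest (hc : T.Connected) {s a b : V} (P : T.Walk s a)
    (hPl : P.length = T.dist s a) (hab : T.dist s a ≤ T.dist s b) (hba : b ≠ a) :
    b ∉ P.support := by
  intro hb
  have h1 : T.dist s b ≤ (P.takeUntil b hb).length := dist_le _
  have h2 : (P.takeUntil b hb).length + (P.dropUntil b hb).length = P.length := by
    rw [← Walk.length_append, Walk.take_spec]
  have h3 : 1 ≤ T.dist b a := hc.pos_dist_of_ne hba
  have h4 : T.dist b a ≤ (P.dropUntil b hb).length := dist_le _
  omega

/-- In a tree, two neighbors of `b` strictly closer to `s` coincide. -/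
lemma uniq_nbr (hT : T.IsTree) {s b a a' : V} (ha : T.Adj a b) (ha' : T.Adj a' b)
    (hd : T.dist s a + 1 = T.dist s b) (hd' : T.dist s a' + 1 = T.dist s b) : a = a' := by
  have hc := hT.isConnected
  obtain ⟨P, hP, hPl⟩ := exists_shortest_path hc s a
  obtain ⟨P', hP', hPl'⟩ := exists_shortest_path hc s a'
  have hbP : b ∉ P.support := not_mem_support_of_shortest hc P hPl (by omega) ha.ne'
  have hbP' : b ∉ P'.support := not_mem_support_of_shortest hc P' hPl' (by omega) ha'.ne'
  have hW : (Walk.cons ha.symm P.reverse).IsPath := by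
    rw [Walk.cons_isPath_iff]
    exact ⟨hP.reverse, by simpa using hbP⟩
  have hW' : (Walk.cons ha'.symm P'.reverse).IsPath := by
    rw [Walk.cons_isPath_iff]
    exact ⟨hP'.reverse, by simpa using hbP'⟩
  have := hT.IsAcyclic.path_unique ⟨_, hW⟩ ⟨_, hW'⟩
  have heq : Walk.cons ha.symm P.reverse = Walk.cons ha'.symm P'.reverse :=
    congrArg Subtype.val this
  injection heq

lemma adj_dist_cases (hT : T.IsTree) {s a b : V} (hab : T.Adj a b) :
    T.dist s a + 1 = T.dist s b ∨ T.dist s b + 1 = T.dist s a := by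
  have hc := hT.isConnected
  have h1 : T.dist a b = 1 := by
    refine le_antisymm ?_ (hc.pos_dist_of_ne hab.ne)
    simpa using dist_le (Walk.cons hab Walk.nil)
  have h2 : T.dist s b ≤ T.dist s a + 1 := by
    have := hc.dist_triangle (u := s) (v := a) (w := b); omega
  have h3 : T.dist s a ≤ T.dist s b + 1 := by
    have h4 := hc.dist_triangle (u := s) (v := b) (w := a)
    have h5 : T.dist b a = 1 := dist_comm (u := a) ▸ h1
    omega
  rcases Nat.lt_trichotomy (T.dist s a) (T.dist s b) with hlt | heqd | hgt
  · left; omega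
  · exfalso
    obtain ⟨P, hP, hPl⟩ := exists_shortest_path hc s a
    obtain ⟨Q, hQ, hQl⟩ := exists_shortest_path hc s b
    have hbP : b ∉ P.support := not_mem_support_of_shortest hc P hPl (by omega) hab.ne'
    have hW : (Walk.cons hab.symm P.reverse).IsPath := by
      rw [Walk.cons_isPath_iff]
      exact ⟨hP.reverse, by simpa using hbP⟩
    have := hT.IsAcyclic.path_unique ⟨_, hW⟩ ⟨_, hQ.reverse⟩
    have heq : Walk.cons hab.symm P.reverse = Q.reverse := congrArg Subtype.val this
    have hle : (Walk.cons hab.symm P.reverse).length = Q.reverse.length := by rw [heq]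
    simp [Walk.length_reverse] at hle
    omega
  · right; omega

lemma exists_parent (hc : T.Connected) {r v : V} (hv : v ≠ r) :
    ∃ u, T.Adj v u ∧ T.dist r u + 1 = T.dist r v := by
  have hd : T.dist v r ≠ 0 := by
    simp [hc.dist_eq_zero_iff, hv]
  obtain ⟨P, hPl⟩ := (hc v r).exists_walk_length_eq_dist
  cases P with
  | nil => simp at hPl hd
  | @cons _ u _ h q =>
    refine ⟨u, h, ?_⟩
    have h1 : T.dist u r ≤ q.length := dist_le q
    have h2 : T.dist v r ≤ T.dist v u + T.dist u r := hc.dist_triangle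
    have h3 : T.dist v u ≤ 1 := by simpa using dist_le (Walk.cons h Walk.nil)
    have h4 : (Walk.cons h q).length = q.length + 1 := by simp
    have h5 : T.dist r u = T.dist u r := dist_comm
    have h6 : T.dist r v = T.dist v r := dist_comm
    omega

/-- `c` is a child of `v` w.r.t. parent map `p`. -/
def childOf (p : V → V) (c v : V) : Prop := p c = v ∧ c ≠ v

instance {p : V → V} {c v : V} : Decidable (childOf p c v) := by
  unfold childOf; infer_instance

/-- The subtree below `v`. -/
def subt (T : SimpleGraph V) (r v : V) : Set V := {u | T.dist r u = T.dist r v + T.dist v u}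

variable {r : V} {p : V → V}

lemma child_ne_root (hpr : p r = r) {c v : V} (h : childOf p c v) : c ≠ r := by
  rintro rfl
  have h1 := h.1
  rw [hpr] at h1
  exact h.2 h1

lemma child_facts (hp : ∀ v, v ≠ r → T.Adj v (p v) ∧ T.dist r (p v) + 1 = T.dist r v)
    (hpr : p r = r) {c v : V} (h : childOf p c v) :
    c ≠ r ∧ T.Adj c v ∧ T.dist r c = T.dist r v + 1 := by
  have hcr : c ≠ r := child_ne_root hpr h
  obtain ⟨ha, hd⟩ := hp c hcr
  rw [h.1] at ha hd
  exact ⟨hcr, ha, by omega⟩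

lemma not_child_parent (hp : ∀ v, v ≠ r → T.Adj v (p v) ∧ T.dist r (p v) + 1 = T.dist r v)
    (hpr : p r = r) {v : V} : ¬ childOf p (p v) v := by
  rintro ⟨hpp, hne⟩
  by_cases hv : v = r
  · subst hv; exact hne hpr
  · by_cases hvr : p v = r
    · rw [hvr, hpr] at hpp; exact hv hpp.symm
    · obtain ⟨_, h1⟩ := hp v hv
      obtain ⟨_, h2⟩ := hp (p v) hvr
      rw [hpp] at h2; omega

lemma self_mem_subt (v : V) : v ∈ subt T r v := by
  simp [subt, dist_self]

lemma subt_closed (hc : T.Connected)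
    (hp : ∀ v, v ≠ r → T.Adj v (p v) ∧ T.dist r (p v) + 1 = T.dist r v) (hpr : p r = r)
    {v u d : V} (hu : u ∈ subt T r v) (hd : childOf p d u) : d ∈ subt T r v := by
  obtain ⟨_, hadj, hdist⟩ := child_facts hp hpr hd
  have h0 : T.dist u d ≤ 1 := by simpa using dist_le (Walk.cons hadj.symm Walk.nil)
  have h1 : T.dist v d ≤ T.dist v u + T.dist u d := hc.dist_triangle
  have h2 : T.dist r d ≤ T.dist r v + T.dist v d := hc.dist_triangle
  have hu' : T.dist r u = T.dist r v + T.dist v u := hu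
  simp only [subt, Set.mem_setOf_eq]
  omega

lemma adj_parent (hT : T.IsTree)
    (hp : ∀ v, v ≠ r → T.Adj v (p v) ∧ T.dist r (p v) + 1 = T.dist r v) (hpr : p r = r)
    {a b : V} (hab : T.Adj a b) : p a = b ∨ p b = a := by
  rcases adj_dist_cases hT (s := r) hab with hd | hd
  · right
    have hbr : b ≠ r := by
      intro hb; rw [hb, dist_self] at hd; omega
    obtain ⟨hadj, hd'⟩ := hp b hbr
    exact (uniq_nbr hT hab hadj.symm hd hd').symm
  · left
    have har : a ≠ r := by
      intro ha; rw [ha, dist_self] at hd; omega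
    obtain ⟨hadj, hd'⟩ := hp a har
    exact (uniq_nbr hT hab.symm hadj.symm hd hd').symm

lemma child_subt (hc : T.Connected)
    (hp : ∀ v, v ≠ r → T.Adj v (p v) ∧ T.dist r (p v) + 1 = T.dist r v) (hpr : p r = r)
    {c v u : V} (hcv : childOf p c v) (hu : u ∈ subt T r c) :
    u ∈ subt T r v ∧ u ≠ v := by
  obtain ⟨_, hadj, hdist⟩ := child_facts hp hpr hcv
  have hu' : T.dist r u = T.dist r c + T.dist c u := hu
  have h0 : T.dist v c ≤ 1 := by simpa using dist_le (Walk.cons hadj.symm Walk.nil)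
  have h1 : T.dist v u ≤ T.dist v c + T.dist c u := hc.dist_triangle
  have h2 : T.dist r u ≤ T.dist r v + T.dist v u := hc.dist_triangle
  constructor
  · simp only [subt, Set.mem_setOf_eq]; omega
  · intro heq
    rw [heq] at hu'
    omega

lemma not_mem_child_subt (hc : T.Connected)
    (hp : ∀ v, v ≠ r → T.Adj v (p v) ∧ T.dist r (p v) + 1 = T.dist r v) (hpr : p r = r)
    {c v : V} (hcv : childOf p c v) : v ∉ subt T r c :=
  fun hv => (child_subt hc hp hpr hcv hv).2 rfl

lemma exists_child_subt (hT : T.IsTree)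
    (hp : ∀ v, v ≠ r → T.Adj v (p v) ∧ T.dist r (p v) + 1 = T.dist r v) (hpr : p r = r)
    {v u : V} (hu : u ∈ subt T r v) (hne : u ≠ v) :
    ∃ c, childOf p c v ∧ u ∈ subt T r c := by
  have hc := hT.isConnected
  have hd : 0 < T.dist v u := hc.pos_dist_of_ne (Ne.symm hne)
  obtain ⟨W, hWl⟩ := (hc v u).exists_walk_length_eq_dist
  cases W with
  | nil => rw [dist_self] at hd; omega
  | @cons _ c _ hadj q =>
    have h1 : T.dist c u ≤ q.length := dist_le q
    have hlen : q.length + 1 = T.dist v u := by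
      simpa using hWl
    have h2 : T.dist v u ≤ 1 + T.dist c u := by
      have ht := hc.dist_triangle (u := v) (v := c) (w := u)
      have : T.dist v c ≤ 1 := by simpa using dist_le (Walk.cons hadj Walk.nil)
      omega
    have hcu : T.dist c u + 1 = T.dist v u := by omega
    have hu' : T.dist r u = T.dist r v + T.dist v u := hu
    have hcpv : c ≠ p v := by
      intro hceq
      by_cases hv : v = r
      · subst hv
        rw [hpr] at hceq
        exact hadj.ne' hceq
      · obtain ⟨_, hd'⟩ := hp v hv
        have ht1 : T.dist r u ≤ T.dist r (p v) + T.dist (p v) u := hc.dist_triangle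
        rw [hceq] at hcu
        omega
    rcases adj_parent hT hp hpr hadj with hpar | hpar
    · exact absurd hpar.symm hcpv
    · refine ⟨c, ⟨hpar, hadj.ne'⟩, ?_⟩
      have hdc : T.dist r c = T.dist r v + 1 := (child_facts hp hpr ⟨hpar, hadj.ne'⟩).2.2
      simp only [subt, Set.mem_setOf_eq]
      omega

lemma parent_mem_subt (hT : T.IsTree)
    (hp : ∀ v, v ≠ r → T.Adj v (p v) ∧ T.dist r (p v) + 1 = T.dist r v) (hpr : p r = r)
    {c u : V} (hu : u ∈ subt T r c) (hne : u ≠ c) : p u ∈ subt T r c := by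
  have hc := hT.isConnected
  have hu' : T.dist r u = T.dist r c + T.dist c u := hu
  have hd : 0 < T.dist c u := hc.pos_dist_of_ne (Ne.symm hne)
  have hur : u ≠ r := by
    intro hur
    rw [hur] at hu' hd
    rw [SimpleGraph.dist_self] at hu'
    omega
  obtain ⟨hpu_adj, hpu_dist⟩ := hp u hur
  obtain ⟨W, hWl⟩ := (hc u c).exists_walk_length_eq_dist
  have hduc : 0 < T.dist u c := by rw [SimpleGraph.dist_comm]; omega
  cases W with
  | nil => rw [SimpleGraph.dist_self] at hduc; omega
  | @cons _ w _ hadj q =>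
    have h1 : T.dist w c ≤ q.length := dist_le q
    have hlen : q.length + 1 = T.dist u c := by simpa using hWl
    have h2 : T.dist u c ≤ 1 + T.dist w c := by
      have ht := hc.dist_triangle (u := u) (v := w) (w := c)
      have : T.dist u w ≤ 1 := by simpa using dist_le (Walk.cons hadj Walk.nil)
      omega
    have hwc : T.dist w c + 1 = T.dist u c := by omega
    rcases adj_parent hT hp hpr hadj with hpar | hpar
    · -- p u = w
      have hcw : T.dist c w + 1 = T.dist c u := by
        rw [SimpleGraph.dist_comm (u := c) (v := w), SimpleGraph.dist_comm (u := c) (v := u)]; omega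
      have ht : T.dist r (p u) ≤ T.dist r c + T.dist c (p u) := hc.dist_triangle
      rw [hpar]
      simp only [subt, Set.mem_setOf_eq]
      rw [hpar] at hpu_dist
      omega
    · -- p w = u : contradiction
      exfalso
      have hwr : w ≠ r := by
        intro hwr
        rw [hwr, hpr] at hpar
        exact hadj.ne (hpar.symm.trans hwr.symm)
      obtain ⟨_, hwd⟩ := hp w hwr
      rw [hpar] at hwd
      have ht : T.dist r w ≤ T.dist r c + T.dist c w := hc.dist_triangle
      have hcw : T.dist c w + 1 = T.dist c u := by
        rw [SimpleGraph.dist_comm (u := c) (v := w), SimpleGraph.dist_comm (u := c) (v := u)]; omega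
      omega

lemma subt_disj (hT : T.IsTree)
    (hp : ∀ v, v ≠ r → T.Adj v (p v) ∧ T.dist r (p v) + 1 = T.dist r v) (hpr : p r = r)
    {c c' v u : V} (h1 : childOf p c v) (h2 : childOf p c' v)
    (hu : u ∈ subt T r c) (hu' : u ∈ subt T r c') : c = c' := by
  have hc := hT.isConnected
  obtain ⟨_, hadj, hdist⟩ := child_facts hp hpr h1
  obtain ⟨_, hadj', hdist'⟩ := child_facts hp hpr h2
  have huv : u ∈ subt T r v := (child_subt hc hp hpr h1 hu).1
  have e0 : T.dist r u = T.dist r v + T.dist v u := huv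
  have e1 : T.dist r u = T.dist r c + T.dist c u := hu
  have e2 : T.dist r u = T.dist r c' + T.dist c' u := hu'
  refine uniq_nbr hT (s := u) hadj hadj' ?_ ?_
  · rw [SimpleGraph.dist_comm (u := u) (v := c), SimpleGraph.dist_comm (u := u) (v := v)]; omega
  · rw [SimpleGraph.dist_comm (u := u) (v := c'), SimpleGraph.dist_comm (u := u) (v := v)]; omega


section FT
variable [Fintype V] [DecidableRel T.Adj]

/-- children of `v` as a finset. -/
def childF (p : V → V) (v : V) : Finset V := univ.filter (fun c => childOf p c v)

/-- the label (= eventual indegree) of `v` under edge-assignment `x`. -/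
def labf (p : V → V) (x : V → Bool) (v : V) : ℕ :=
  (if x v = true then 1 else 0) + (univ.filter (fun c => childOf p c v ∧ x c = false)).card

/-- validity of assignment `x` on the subtree below `v`. -/
def ValidOn (T : SimpleGraph V) (r : V) (p : V → V) (x : V → Bool) (v : V) : Prop :=
  ∀ u ∈ subt T r v, labf p x u ≤ 3 ∧ (u ≠ v → labf p x u ≠ labf p x (p u))

lemma degree_eq_nonroot (hT : T.IsTree)
    (hp : ∀ v, v ≠ r → T.Adj v (p v) ∧ T.dist r (p v) + 1 = T.dist r v) (hpr : p r = r)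
    {v : V} (hv : v ≠ r) : T.degree v = (childF p v).card + 1 := by
  have hnb : T.neighborFinset v = insert (p v) (childF p v) := by
    ext u
    simp only [mem_neighborFinset, mem_insert, childF, mem_filter, mem_univ, true_and]
    constructor
    · intro hadj
      rcases adj_parent hT hp hpr hadj.symm with h1 | h1
      · right; exact ⟨h1, hadj.ne'⟩
      · left; exact h1.symm
    · rintro (rfl | hch)
      · exact (hp v hv).1
      · exact ((child_facts hp hpr hch).2.1).symm
  rw [degree, hnb, card_insert_of_notMem]
  intro hmem
  rw [childF, mem_filter] at hmem
  exact not_child_parent hp hpr hmem.2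

lemma degree_eq_root (hT : T.IsTree)
    (hp : ∀ v, v ≠ r → T.Adj v (p v) ∧ T.dist r (p v) + 1 = T.dist r v) (hpr : p r = r) :
    T.degree r = (childF p r).card := by
  have hnb : T.neighborFinset r = childF p r := by
    ext u
    simp only [mem_neighborFinset, childF, mem_filter, mem_univ, true_and]
    constructor
    · intro hadj
      rcases adj_parent hT hp hpr hadj.symm with h1 | h1
      · exact ⟨h1, hadj.ne'⟩
      · rw [hpr] at h1; exact absurd h1.symm hadj.ne'
    · intro hch
      exact ((child_facts hp hpr hch).2.1).symm
  rw [degree, hnb]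

lemma labf_congr {f g : V → Bool} {s : Set V}
    (hclosed : ∀ u ∈ s, ∀ d, childOf p d u → d ∈ s)
    (hagree : ∀ w ∈ s, f w = g w) {u : V} (hu : u ∈ s) :
    labf p f u = labf p g u := by
  unfold labf
  rw [hagree u hu]
  have hfe : (univ.filter (fun c => childOf p c u ∧ f c = false)) =
      (univ.filter (fun c => childOf p c u ∧ g c = false)) := by
    apply Finset.filter_congr
    intro c _
    constructor
    · rintro ⟨h1, h2⟩
      exact ⟨h1, by rw [← hagree c (hclosed u hu c h1)]; exact h2⟩
    · rintro ⟨h1, h2⟩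
      exact ⟨h1, by rw [hagree c (hclosed u hu c h1)]; exact h2⟩
  rw [hfe]

/-- glue child assignments into one assignment. -/
noncomputable def glueF (T : SimpleGraph V) (r : V) (p : V → V) (v : V) (δ : Bool)
    (y : V → V → Bool) : V → Bool :=
  open Classical in
  fun u => if h : ∃ c, childOf p c v ∧ u ∈ subt T r c then y h.choose u
    else (if u = v then δ else false)

lemma glueF_eq (hT : T.IsTree)
    (hp : ∀ v, v ≠ r → T.Adj v (p v) ∧ T.dist r (p v) + 1 = T.dist r v) (hpr : p r = r)
    {v c u : V} {δ : Bool} {y : V → V → Bool}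
    (hc : childOf p c v) (hu : u ∈ subt T r c) : glueF T r p v δ y u = y c u := by
  have h : ∃ c, childOf p c v ∧ u ∈ subt T r c := ⟨c, hc, hu⟩
  rw [glueF, dif_pos h]
  obtain ⟨h1, h2⟩ := h.choose_spec
  rw [subt_disj hT hp hpr h1 hc h2 hu]

lemma glueF_self (hT : T.IsTree)
    (hp : ∀ v, v ≠ r → T.Adj v (p v) ∧ T.dist r (p v) + 1 = T.dist r v) (hpr : p r = r)
    {v : V} {δ : Bool} {y : V → V → Bool} : glueF T r p v δ y v = δ := by
  rw [glueF, dif_neg, if_pos rfl]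
  rintro ⟨c, hc, hv⟩
  exact not_mem_child_subt hT.isConnected hp hpr hc hv

lemma labf_glueF (hT : T.IsTree)
    (hp : ∀ v, v ≠ r → T.Adj v (p v) ∧ T.dist r (p v) + 1 = T.dist r v) (hpr : p r = r)
    {v : V} {δ : Bool} {y : V → V → Bool} :
    labf p (glueF T r p v δ y) v =
      (if δ = true then 1 else 0) + (univ.filter (fun c => childOf p c v ∧ y c c = false)).card := by
  unfold labf
  rw [glueF_self hT hp hpr]
  have hfe : (univ.filter (fun c => childOf p c v ∧ glueF T r p v δ y c = false)) =
      (univ.filter (fun c => childOf p c v ∧ y c c = false)) := by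
    apply Finset.filter_congr
    intro c _
    constructor
    · rintro ⟨h1, h2⟩
      exact ⟨h1, by rwa [glueF_eq hT hp hpr h1 (self_mem_subt c)] at h2⟩
    · rintro ⟨h1, h2⟩
      exact ⟨h1, by rwa [glueF_eq hT hp hpr h1 (self_mem_subt c)]⟩
  rw [hfe]

/-- The main gluing lemma: if each child's assignment is valid on its subtree,
the glued assignment is valid on `v`'s subtree provided labels at `v` behave. -/
lemma glueF_valid (hT : T.IsTree)
    (hp : ∀ v, v ≠ r → T.Adj v (p v) ∧ T.dist r (p v) + 1 = T.dist r v) (hpr : p r = r)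
    {v : V} {δ : Bool} {y : V → V → Bool}
    (hy : ∀ c, childOf p c v → ValidOn T r p (y c) c)
    (hne : ∀ c, childOf p c v → labf p (y c) c ≠ labf p (glueF T r p v δ y) v)
    (hle : labf p (glueF T r p v δ y) v ≤ 3) :
    ValidOn T r p (glueF T r p v δ y) v := by
  intro u hu
  by_cases huv : u = v
  · subst huv
    exact ⟨hle, fun hne' => absurd rfl hne'⟩
  · obtain ⟨c, hc, huc⟩ := exists_child_subt hT hp hpr hu huv
    have hcong : ∀ w, w ∈ subt T r c → labf p (glueF T r p v δ y) w = labf p (y c) w := by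
      intro w hw
      exact labf_congr (fun a ha d hd => subt_closed hT.isConnected hp hpr ha hd)
        (fun a ha => glueF_eq hT hp hpr hc ha) hw
    have hu3 := (hy c hc) u huc
    refine ⟨by rw [hcong u huc]; exact hu3.1, fun _ => ?_⟩
    by_cases huc' : u = c
    · subst huc'
      rw [hc.1, hcong u (self_mem_subt u)]
      exact hne u hc
    · rw [hcong u huc, hcong (p u) (parent_mem_subt hT hp hpr huc huc')]
      exact hu3.2 huc'


/-- The main induction: existence of good assignments on subtrees. -/
lemma main_exists (hT : T.IsTree)
    (hp : ∀ v, v ≠ r → T.Adj v (p v) ∧ T.dist r (p v) + 1 = T.dist r v) (hpr : p r = r)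
    (hdeg : ∀ u v, T.Adj u v → ¬ (4 ≤ T.degree u ∧ 4 ≤ T.degree v)) :
    ∀ (n : ℕ) (v : V), Fintype.card V - T.dist r v ≤ n →
      ((∃ x : V → Bool, x v = false ∧ labf p x v = 0 ∧ ValidOn T r p x v) ∧
       (v ≠ r → ∃ (t : ℕ) (x : V → Bool), x v = true ∧ labf p x v = t ∧ ValidOn T r p x v ∧
          1 ≤ t ∧ t ≤ 3 ∧ (t = 3 → 4 ≤ T.degree v))) := by
  intro n
  induction n with
  | zero =>
    intro v hv
    have := dist_lt_card hT.isConnected r v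
    omega
  | succ n ih =>
    intro v hv
    have ihc : ∀ c, childOf p c v →
        ((∃ x : V → Bool, x c = false ∧ labf p x c = 0 ∧ ValidOn T r p x c) ∧
         (c ≠ r → ∃ (t : ℕ) (x : V → Bool), x c = true ∧ labf p x c = t ∧ ValidOn T r p x c ∧
            1 ≤ t ∧ t ≤ 3 ∧ (t = 3 → 4 ≤ T.degree c))) := by
      intro c hc
      have hd := (child_facts hp hpr hc).2.2
      exact ih c (by omega)
    have part1 := fun c hc => (ihc c hc).1
    choose! x0 hx0f hx0lab hx0val using part1
    have part2 := fun c hc => (ihc c hc).2 (child_facts hp hpr hc).1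
    choose! t x1 hx1f hx1lab hx1val ht1 ht3 ht4 using part2
    have hmemC : ∀ c, c ∈ childF p v ↔ childOf p c v := by
      intro c; simp [childF]
    constructor
    · -- option (δ = 0, label 0): all children out
      refine ⟨glueF T r p v false x1, glueF_self hT hp hpr, ?_, ?_⟩
      · rw [labf_glueF hT hp hpr]
        have : (univ.filter (fun c => childOf p c v ∧ x1 c c = false)) = ∅ := by
          ext c
          simp only [mem_filter, mem_univ, true_and, notMem_empty, iff_false, not_and]
          intro hc
          rw [hx1f c hc]
          simp
        rw [this]
        simp
      · apply glueF_valid hT hp hpr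
        · exact fun c hc => hx1val c hc
        · intro c hc
          rw [hx1lab c hc]
          rw [labf_glueF hT hp hpr]
          have : (univ.filter (fun c => childOf p c v ∧ x1 c c = false)) = ∅ := by
            ext c
            simp only [mem_filter, mem_univ, true_and, notMem_empty, iff_false, not_and]
            intro hc
            rw [hx1f c hc]
            simp
          rw [this]
          simp
          have := ht1 c hc
          omega
        · rw [labf_glueF hT hp hpr]
          have : (univ.filter (fun c => childOf p c v ∧ x1 c c = false)) = ∅ := by
            ext c
            simp only [mem_filter, mem_univ, true_and, notMem_empty, iff_false, not_and]
            intro hc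
            rw [hx1f c hc]
            simp
          rw [this]
          simp
    · -- option (δ = 1)
      intro hvr
      have hdegv : T.degree v = (childF p v).card + 1 := degree_eq_nonroot hT hp hpr hvr
      by_cases hhigh : 4 ≤ T.degree v
      · -- high-degree vertex: two children in, rest out, label 3
        have h3 : 3 ≤ (childF p v).card := by omega
        obtain ⟨c₁, hc₁⟩ := Finset.card_pos.mp (by omega : 0 < (childF p v).card)
        have h2 : 0 < ((childF p v).erase c₁).card := by
          rw [Finset.card_erase_of_mem hc₁]; omega
        obtain ⟨c₂, hc₂e⟩ := Finset.card_pos.mp h2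
        have hc₂ : c₂ ∈ childF p v := Finset.mem_of_mem_erase hc₂e
        have hne12 : c₂ ≠ c₁ := Finset.ne_of_mem_erase hc₂e
        set y : V → V → Bool := fun c => if c = c₁ ∨ c = c₂ then x0 c else x1 c with hy
        have hcard : (univ.filter (fun c => childOf p c v ∧ y c c = false)) = {c₁, c₂} := by
          ext c
          simp only [mem_filter, mem_univ, true_and, mem_insert, mem_singleton]
          constructor
          · rintro ⟨hch, hfalse⟩
            by_cases hcc : c = c₁ ∨ c = c₂
            · exact hcc
            · exfalso
              rw [hy] at hfalse
              simp only [if_neg hcc] at hfalse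
              rw [hx1f c hch] at hfalse
              simp at hfalse
          · intro hcc
            have hch : childOf p c v := by
              rcases hcc with rfl | rfl
              · exact (hmemC c).mp hc₁
              · exact (hmemC c).mp hc₂
            refine ⟨hch, ?_⟩
            rw [hy]
            simp only [if_pos hcc]
            exact hx0f c hch
        have hlab3 : labf p (glueF T r p v true y) v = 3 := by
          rw [labf_glueF hT hp hpr, hcard]
          rw [Finset.card_insert_of_notMem (by simp [hne12.symm]), Finset.card_singleton]
          simp
        refine ⟨3, glueF T r p v true y, glueF_self hT hp hpr, hlab3, ?_, by omega, by omega,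
          fun _ => hhigh⟩
        apply glueF_valid hT hp hpr
        · intro c hc
          rw [hy]
          by_cases hcc : c = c₁ ∨ c = c₂
          · simp only [if_pos hcc]; exact hx0val c hc
          · simp only [if_neg hcc]; exact hx1val c hc
        · intro c hc
          rw [hlab3, hy]
          by_cases hcc : c = c₁ ∨ c = c₂
          · simp only [if_pos hcc]
            rw [hx0lab c hc]
            omega
          · simp only [if_neg hcc]
            rw [hx1lab c hc]
            have hadj : T.Adj v c := ((child_facts hp hpr hc).2.1).symm
            have hdc := hdeg v c hadj
            have hdc4 : ¬ 4 ≤ T.degree c := fun hh => hdc ⟨hhigh, hh⟩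
            have := ht3 c hc
            have := ht4 c hc
            omega
        · rw [hlab3]
      · -- low-degree vertex
        have hk2 : (childF p v).card ≤ 2 := by omega
        by_cases hbad : ∃ c ∈ childF p v, t c = 1
        · obtain ⟨c₀, hc₀, htc₀⟩ := hbad
          by_cases hk : ∃ c₁ ∈ childF p v, c₁ ≠ c₀
          · -- two children: put the other child in, label 2
            obtain ⟨c₁, hc₁, hne10⟩ := hk
            set y : V → V → Bool := fun c => if c = c₁ then x0 c else x1 c with hy
            have hcard : (univ.filter (fun c => childOf p c v ∧ y c c = false)) = {c₁} := by
              ext c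
              simp only [mem_filter, mem_univ, true_and, mem_singleton]
              constructor
              · rintro ⟨hch, hfalse⟩
                by_cases hcc : c = c₁
                · exact hcc
                · exfalso
                  rw [hy] at hfalse
                  simp only [if_neg hcc] at hfalse
                  rw [hx1f c hch] at hfalse
                  simp at hfalse
              · rintro rfl
                refine ⟨(hmemC c).mp hc₁, ?_⟩
                rw [hy]
                simp only [if_pos rfl]
                exact Finset.mem_filter.mp hc₁ |>.2 |> fun hch => hx0f c hch
            have hlab2 : labf p (glueF T r p v true y) v = 2 := by
              rw [labf_glueF hT hp hpr, hcard, Finset.card_singleton]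
              simp
            refine ⟨2, glueF T r p v true y, glueF_self hT hp hpr, hlab2, ?_, by omega, by omega,
          by omega⟩
            apply glueF_valid hT hp hpr
            · intro c hc
              rw [hy]
              by_cases hcc : c = c₁
              · simp only [if_pos hcc]; exact hx0val c hc
              · simp only [if_neg hcc]; exact hx1val c hc
            · intro c hc
              rw [hlab2, hy]
              by_cases hcc : c = c₁
              · simp only [if_pos hcc]
                rw [hx0lab c hc]
                omega
              · simp only [if_neg hcc]
                rw [hx1lab c hc]
                -- c must be c₀, whose t-value is 1
                have hcC : c ∈ childF p v := (hmemC c).mpr hc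
                have hc0 : c = c₀ := by
                  by_contra hcc0
                  have hsub : {c₀, c₁, c} ⊆ childF p v := by
                    intro z hz
                    simp only [mem_insert, mem_singleton] at hz
                    rcases hz with rfl | rfl | rfl <;> assumption
                  have hcard3 : ({c₀, c₁, c} : Finset V).card = 3 := by
                    rw [Finset.card_insert_of_notMem, Finset.card_insert_of_notMem,
                      Finset.card_singleton]
                    · simp only [mem_singleton]
                      exact fun h => hcc h.symm
                    · simp only [mem_insert, mem_singleton]
                      push_neg
                      exact ⟨hne10.symm, Ne.symm hcc0⟩
                  have := Finset.card_le_card hsub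
                  omega
                rw [hc0, htc₀]
                omega
            · rw [hlab2]; omega
          · -- single child c₀ (all children equal c₀), orient it in, label 2
            push_neg at hk
            have hc₀' : childOf p c₀ v := (hmemC c₀).mp hc₀
            have hcard : (univ.filter (fun c => childOf p c v ∧ x0 c c = false)) = {c₀} := by
              ext c
              simp only [mem_filter, mem_univ, true_and, mem_singleton]
              constructor
              · rintro ⟨hch, _⟩
                exact hk c ((hmemC c).mpr hch)
              · intro hcq
                subst hcq
                exact ⟨hc₀', hx0f c hc₀'⟩
            have hlab2 : labf p (glueF T r p v true x0) v = 2 := by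
              rw [labf_glueF hT hp hpr, hcard, Finset.card_singleton]
              simp
            refine ⟨2, glueF T r p v true x0, glueF_self hT hp hpr, hlab2, ?_, by omega, by omega,
              by omega⟩
            apply glueF_valid hT hp hpr
            · exact fun c hc => hx0val c hc
            · intro c hc
              rw [hlab2, hx0lab c hc]
              omega
            · rw [hlab2]; omega
        · -- no bad child: all out, label 1
          refine ⟨1, glueF T r p v true x1, glueF_self hT hp hpr, ?_, ?_, by omega, by omega,
            by omega⟩
          · rw [labf_glueF hT hp hpr]
            have : (univ.filter (fun c => childOf p c v ∧ x1 c c = false)) = ∅ := by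
              ext c
              simp only [mem_filter, mem_univ, true_and, notMem_empty, iff_false, not_and]
              intro hc
              rw [hx1f c hc]
              simp
            rw [this]
            simp
          · apply glueF_valid hT hp hpr
            · exact fun c hc => hx1val c hc
            · intro c hc
              rw [hx1lab c hc]
              rw [labf_glueF hT hp hpr]
              have hemp : (univ.filter (fun c => childOf p c v ∧ x1 c c = false)) = ∅ := by
                ext c
                simp only [mem_filter, mem_univ, true_and, notMem_empty, iff_false, not_and]
                intro hc
                rw [hx1f c hc]
                simp
              rw [hemp]
              simp
              push_neg at hbad
              have := hbad c ((hmemC c).mpr hc)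
              have := ht1 c hc
              omega
            · rw [labf_glueF hT hp hpr]
              have hemp : (univ.filter (fun c => childOf p c v ∧ x1 c c = false)) = ∅ := by
                ext c
                simp only [mem_filter, mem_univ, true_and, notMem_empty, iff_false, not_and]
                intro hc
                rw [hx1f c hc]
                simp
              rw [hemp]
              simp
  
  -- the case where one child exists and all children equal c₀ is missing above; fix below

end FT
end POTree

/-- If `T` is a tree with no two adjacent vertices both of degree at least four,
then `χ⃗(T) ≤ 3`. -/
theorem properOrientNum_tree_le_three {V : Type*} [Fintype V]
    (T : SimpleGraph V) [DecidableRel T.Adj] (hT : T.IsTree)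
    (h : ∀ u v, T.Adj u v → ¬ (4 ≤ T.degree u ∧ 4 ≤ T.degree v)) :
    properOrientNum T ≤ 3 := by
  classical
  have hc := hT.isConnected
  obtain ⟨r⟩ : Nonempty V := hc.nonempty
  have hp' : ∀ v : V, ∃ u, v ≠ r → (T.Adj v u ∧ T.dist r u + 1 = T.dist r v) := by
    intro v
    by_cases hv : v = r
    · exact ⟨v, fun hne => absurd hv hne⟩
    · obtain ⟨u, h1, h2⟩ := POTree.exists_parent hc hv
      exact ⟨u, fun _ => ⟨h1, h2⟩⟩
  choose p₀ hp₀ using hp'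
  set p : V → V := fun v => if v = r then r else p₀ v with hpdef
  have hpr : p r = r := by simp [hpdef]
  have hp : ∀ v, v ≠ r → T.Adj v (p v) ∧ T.dist r (p v) + 1 = T.dist r v := by
    intro v hv
    simp only [hpdef, if_neg hv]
    exact hp₀ v hv
  obtain ⟨⟨x, hxf, hxlab, hxval⟩, -⟩ :=
    POTree.main_exists hT hp hpr h (Fintype.card V) r (by omega)
  have hall : ∀ u, u ∈ POTree.subt T r r := by
    intro u
    show T.dist r u = T.dist r r + T.dist r u
    rw [SimpleGraph.dist_self]
    omega
  have hle3 : ∀ u, POTree.labf p x u ≤ 3 := fun u => (hxval u (hall u)).1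
  have hproper : ∀ a b, T.Adj a b → POTree.labf p x a ≠ POTree.labf p x b := by
    intro a b hab
    rcases POTree.adj_parent hT hp hpr hab with h1 | h1
    · have har : a ≠ r := by
        intro hra
        rw [hra, hpr] at h1
        exact hab.ne (hra.trans h1)
      have := (hxval a (hall a)).2 har
      rwa [h1] at this
    · have hbr : b ≠ r := by
        intro hrb
        rw [hrb, hpr] at h1
        exact hab.ne' (hrb.trans h1)
      have := (hxval b (hall b)).2 hbr
      rw [h1] at this
      exact this.symm
  have honeside : ∀ a b, T.Adj a b → ¬(p a = b ∧ p b = a) := by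
    rintro a b hab ⟨h1, h2⟩
    by_cases har : a = r
    · rw [har, hpr] at h1
      exact hab.ne (har.trans h1)
    · by_cases hbr : b = r
      · rw [hbr, hpr] at h2
        exact hab.ne' (hbr.trans h2)
      · have e1 := (hp a har).2
        rw [h1] at e1
        have e2 := (hp b hbr).2
        rw [h2] at e2
        omega
  set dir : V → V → Bool :=
    fun a b => decide (T.Adj a b ∧ ((p a = b ∧ x a = false) ∨ (p b = a ∧ x b = true)))
    with hdirdef
  have hdir_iff : ∀ a b, dir a b = true ↔
      (T.Adj a b ∧ ((p a = b ∧ x a = false) ∨ (p b = a ∧ x b = true))) := by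
    intro a b
    simp [hdirdef]
  have hadj_of : ∀ a b, dir a b = true → T.Adj a b := fun a b hd => ((hdir_iff a b).mp hd).1
  have key : ∀ a b, T.Adj a b → p a = b →
      ((dir a b = true ↔ x a = false) ∧ (dir b a = true ↔ x a = true)) := by
    intro a b hab h1
    have h2 : ¬ p b = a := fun hh => honeside a b hab ⟨h1, hh⟩
    constructor
    · rw [hdir_iff]
      constructor
      · rintro ⟨_, ⟨_, hxa⟩ | ⟨hpb, _⟩⟩
        · exact hxa
        · exact absurd hpb h2
      · intro hxa
        exact ⟨hab, Or.inl ⟨h1, hxa⟩⟩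
    · rw [hdir_iff]
      constructor
      · rintro ⟨_, ⟨hpb, _⟩ | ⟨_, hxa⟩⟩
        · exact absurd hpb h2
        · exact hxa
      · intro hxa
        exact ⟨hab.symm, Or.inr ⟨h1, hxa⟩⟩
  have hdir2 : ∀ a b, T.Adj a b → (dir a b = true ↔ ¬ dir b a = true) := by
    intro a b hab
    rcases POTree.adj_parent hT hp hpr hab with h1 | h1
    · rw [(key a b hab h1).1, (key a b hab h1).2]
      cases hxa : x a <;> simp
    · rw [(key b a hab.symm h1).1, (key b a hab.symm h1).2]
      cases hxb : x b <;> simp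
  set D : Orient T := ⟨dir, hadj_of, hdir2⟩ with hDdef
  have hindeg : ∀ v, D.inDeg v = POTree.labf p x v := by
    intro v
    show (Finset.univ.filter fun u => dir u v = true).card = _
    by_cases hvx : x v = true ∧ v ≠ r
    · have hfe : (Finset.univ.filter fun u => dir u v = true) =
          insert (p v) (Finset.univ.filter fun u => POTree.childOf p u v ∧ x u = false) := by
        ext u
        simp only [Finset.mem_filter, Finset.mem_univ, true_and, Finset.mem_insert]
        rw [hdir_iff]
        constructor
        · rintro ⟨hadj, ⟨hpu, hxu⟩ | ⟨hpv, hxv⟩⟩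
          · right; exact ⟨⟨hpu, hadj.ne⟩, hxu⟩
          · left; exact hpv.symm
        · rintro (rfl | ⟨⟨hpu, hneu⟩, hxu⟩)
          · exact ⟨(hp v hvx.2).1.symm, Or.inr ⟨rfl, hvx.1⟩⟩
          · exact ⟨(POTree.child_facts hp hpr ⟨hpu, hneu⟩).2.1, Or.inl ⟨hpu, hxu⟩⟩
      rw [hfe, Finset.card_insert_of_notMem]
      · simp only [POTree.labf, hvx.1, if_true]
        omega
      · intro hmem
        rw [Finset.mem_filter] at hmem
        exact POTree.not_child_parent hp hpr hmem.2.1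
    · have hxv0 : x v = false := by
        rcases Bool.eq_false_or_eq_true (x v) with hb | hb
        · by_cases hvr : v = r
          · rw [hvr]; exact hxf
          · exact absurd ⟨hb, hvr⟩ hvx
        · exact hb
      have hfe : (Finset.univ.filter fun u => dir u v = true) =
          (Finset.univ.filter fun u => POTree.childOf p u v ∧ x u = false) := by
        ext u
        simp only [Finset.mem_filter, Finset.mem_univ, true_and]
        rw [hdir_iff]
        constructor
        · rintro ⟨hadj, ⟨hpu, hxu⟩ | ⟨hpv, hxv⟩⟩
          · exact ⟨⟨hpu, hadj.ne⟩, hxu⟩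
          · rw [hxv0] at hxv; exact absurd hxv (by simp)
        · rintro ⟨⟨hpu, hneu⟩, hxu⟩
          exact ⟨(POTree.child_facts hp hpr ⟨hpu, hneu⟩).2.1, Or.inl ⟨hpu, hxu⟩⟩
      rw [hfe]
      simp only [POTree.labf, hxv0]
      simp
  have hmem3 : 3 ∈ {k | ∃ D : Orient T, D.Proper ∧ ∀ v, D.inDeg v ≤ k} := by
    refine ⟨D, fun a b hab => ?_, fun v => ?_⟩
    · rw [hindeg, hindeg]
      exact hproper a b hab
    · rw [hindeg]
      exact hle3 v
  exact Nat.sInf_le hmem3
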